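/- For n = 3 and each integer m ≥ 1, as ρ → 0⁺: (2S_{2m+3}(ρ) + 3S_{2m+2}(ρ) + 2S_{2m+1}(ρ)·1) divided by (S_{2m+1}(ρ) + S_{2m}(ρ)) — i.e., the momentum variance var_M — equals (2m+3)(2m+4)/(4ρ²) + 2m(2m+3)/((2m+2)ρ) + O(1), where S_k(ρ) = ∑_{l=0}^∞ (l+1) l^k e^{-2ρl}. -/

import Mathlib

set_option maxHeartbeats 1000000
open Finset
noncomputable def coef : ℕ → ℕ → ℝ
  | 0, 0 => 1
  | 0, _+1 => 0
  | r+1, 0 => - coef r 0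
  | r+1, j+1 => (j+1) * coef r j - (j+2) * coef r (j+1)

lemma coef_eq_zero : ∀ r j : ℕ, r < j → coef r j = 0 := by
  intro r
  induction r with
  | zero => intro j hj; match j, hj with | j+1, _ => rfl
  | succ r ih =>
    intro j hj
    match j, hj with
    | j+1, hj =>
      show (j+1 : ℝ) * coef r j - (j+2) * coef r (j+1) = 0
      rw [ih j (by omega), ih (j+1) (by omega)]; ring

lemma coef_diag (r : ℕ) : coef r r = r.factorial := by
  induction r with
  | zero => norm_num [coef]
  | succ r ih =>
    show ((r:ℝ)+1) * coef r r - ((r:ℝ)+2) * coef r (r+1) = _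
    rw [ih, coef_eq_zero r (r+1) (by omega), Nat.factorial_succ]
    push_cast; ring

lemma coef_sub (r : ℕ) : coef (r+1) r = -((r+2).factorial) / 2 := by
  induction r with
  | zero => norm_num [coef, show (1:ℕ)+1 = 2 from rfl]
  | succ r ih =>
    show ((r:ℝ)+1) * coef (r+1) r - ((r:ℝ)+2) * coef (r+1) (r+1) = _
    rw [ih, coef_diag (r+1), Nat.factorial_succ (r+2), Nat.factorial_succ (r+1)]
    push_cast; ring

lemma pow_eq_sum (r l : ℕ) :
    (l:ℝ)^r = ∑ j ∈ range (r+1), coef r j * ((l+j).choose j : ℝ) := by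
  induction r with
  | zero => simp [coef]
  | succ r ih =>
    have key : ∀ j : ℕ, (l:ℝ) * ((l+j).choose j : ℝ)
        = ((j:ℝ)+1) * ((l+j+1).choose (j+1) : ℝ) - ((j:ℝ)+1) * ((l+j).choose j : ℝ) := by
      intro j
      have h := Nat.add_one_mul_choose_eq (l+j) j
      have h2 : ((l+j+1) * (l+j).choose j : ℕ) = ((l+j+1).choose (j+1) * (j+1) : ℕ) := by
        simpa [Nat.succ_eq_add_one] using h
      have h3 : ((l:ℝ)+j+1) * ((l+j).choose j : ℝ) = ((l+j+1).choose (j+1) : ℝ) * ((j:ℝ)+1) := by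
        exact_mod_cast congrArg (Nat.cast : ℕ → ℝ) h2
      linarith [h3]
    have expand : (l:ℝ)^(r+1)
        = ∑ j ∈ range (r+1), (coef r j * ((j:ℝ)+1) * ((l+j+1).choose (j+1) : ℝ)
            - coef r j * ((j:ℝ)+1) * ((l+j).choose j : ℝ)) := by
      calc (l:ℝ)^(r+1) = (l:ℝ) * (l:ℝ)^r := by ring
      _ = ∑ j ∈ range (r+1), coef r j * ((l:ℝ) * ((l+j).choose j : ℝ)) := by
          rw [ih, mul_sum]; exact sum_congr rfl fun j _ => by ring
      _ = _ := by
          refine sum_congr rfl fun j _ => ?_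
          rw [key j]; ring
    rw [expand, sum_sub_distrib]
    -- target: A - B = ∑ j ∈ range (r+2), coef (r+1) j * C(l+j,j)
    rw [Finset.sum_range_succ' (fun j => coef (r+1) j * ((l+j).choose j : ℝ)) (r+1)]
    have step1 : ∀ j : ℕ, coef (r+1) (j+1) = ((j:ℝ)+1) * coef r j - ((j:ℝ)+2) * coef r (j+1) := by
      intro j; rfl
    have hB : ∑ j ∈ range (r+1), coef r j * ((j:ℝ)+1) * ((l+j).choose j : ℝ)
        = ∑ j ∈ range r, coef r (j+1) * ((j:ℝ)+2) * ((l+(j+1)).choose (j+1) : ℝ)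
          + coef r 0 := by
      rw [Finset.sum_range_succ' (fun j => coef r j * ((j:ℝ)+1) * ((l+j).choose j : ℝ)) r]
      congr 1
      · exact sum_congr rfl fun j _ => by push_cast; ring
      · simp
    have hA : ∑ j ∈ range (r+1), coef r j * ((j:ℝ)+1) * ((l+j+1).choose (j+1) : ℝ)
        = ∑ j ∈ range (r+1), coef (r+1) (j+1) * ((l+(j+1)).choose (j+1) : ℝ)
          + ∑ j ∈ range (r+1), ((j:ℝ)+2) * coef r (j+1) * ((l+j+1).choose (j+1) : ℝ) := by
      rw [← sum_add_distrib]
      refine sum_congr rfl fun j _ => ?_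
      rw [step1 j]
      push_cast; ring
    have hzero : ∑ j ∈ range (r+1), ((j:ℝ)+2) * coef r (j+1) * ((l+j+1).choose (j+1) : ℝ)
        = ∑ j ∈ range r, coef r (j+1) * ((j:ℝ)+2) * ((l+(j+1)).choose (j+1) : ℝ) := by
      rw [Finset.sum_range_succ]
      rw [coef_eq_zero r (r+1) (by omega)]
      rw [mul_zero, zero_mul, add_zero]
      exact sum_congr rfl fun j _ => by ring
    have hc0 : coef (r+1) 0 * ((l+0).choose 0 : ℝ) = - coef r 0 := by
      show (- coef r 0) * _ = _
      simp
    rw [hA, hzero, hB, hc0]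
    ring

lemma hasSum_pow (r : ℕ) {x : ℝ} (hx : ‖x‖ < 1) :
    HasSum (fun l:ℕ => (l:ℝ)^r * x^l)
      (∑ j ∈ range (r+1), coef r j * (1/(1-x)^(j+1))) := by
  have h : ∀ j : ℕ, HasSum (fun l:ℕ => coef r j * (((l+j).choose j : ℝ) * x^l))
      (coef r j * (1/(1-x)^(j+1))) := fun j =>
    (hasSum_choose_mul_geometric_of_norm_lt_one j hx).mul_left _
  have hsum := hasSum_sum (fun j (_ : j ∈ range (r+1)) => h j)
  convert hsum using 1
  funext l
  rw [pow_eq_sum r l, sum_mul]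
  exact sum_congr rfl fun j _ => by ring

lemma hasSum_S (k : ℕ) {x : ℝ} (hx : ‖x‖ < 1) :
    HasSum (fun l:ℕ => ((l:ℝ)+1) * (l:ℝ)^k * x^l)
      (∑ j ∈ range (k+2), (coef (k+1) j + coef k j) * (1/(1-x)^(j+1))) := by
  have h1 := hasSum_pow (k+1) hx
  have h2 := hasSum_pow k hx
  have h2' : HasSum (fun l:ℕ => (l:ℝ)^k * x^l)
      (∑ j ∈ range (k+2), coef k j * (1/(1-x)^(j+1))) := by
    rw [Finset.sum_range_succ, coef_eq_zero k (k+1) (by omega)]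
    simpa using h2
  have := h1.add h2'
  rw [← sum_add_distrib] at this
  convert this using 1
  · funext l; ring
  · exact sum_congr rfl fun j _ => by ring

lemma S_eq (k : ℕ) {ρ : ℝ} (hρ : 0 < ρ) :
    (∑' l:ℕ, ((l:ℝ)+1) * (l:ℝ)^k * Real.exp (-2*ρ*l))
      = ∑ j ∈ range (k+2), (coef (k+1) j + coef k j) * (1/(1 - Real.exp (-2*ρ))^(j+1)) := by
  have hx : ‖Real.exp (-2*ρ)‖ < 1 := by
    rw [Real.norm_eq_abs, abs_of_pos (Real.exp_pos _)]
    exact Real.exp_lt_one_iff.mpr (by linarith)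
  rw [← (hasSum_S k hx).tsum_eq]
  refine tsum_congr fun l => ?_
  rw [show (-2*ρ*(l:ℕ) : ℝ) = (l:ℕ) * (-2*ρ) by push_cast; ring, Real.exp_nat_mul]

lemma S_approx (k : ℕ) : ∃ C : ℝ, 0 < C ∧ ∀ ρ : ℝ, ρ ∈ Set.Ioo (0:ℝ) 1 →
    |(∑' l:ℕ, ((l:ℝ)+1) * (l:ℝ)^k * Real.exp (-2*ρ*l)) * (1 - Real.exp (-2*ρ))^(k+2)
      - ((((k+1).factorial : ℝ)) + (((k.factorial : ℝ)) - ((k+2).factorial : ℝ)/2) * (1 - Real.exp (-2*ρ)))|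
      ≤ C * (1 - Real.exp (-2*ρ))^2 := by
  refine ⟨(∑ j ∈ range k, |coef (k+1) j + coef k j|) + 1, by positivity, ?_⟩
  intro ρ hρ
  have hx1 : Real.exp (-2*ρ) < 1 := Real.exp_lt_one_iff.mpr (by nlinarith [hρ.1])
  have hx0 : 0 < Real.exp (-2*ρ) := Real.exp_pos _
  set y : ℝ := 1 - Real.exp (-2*ρ) with hydef
  have hy0 : 0 < y := by simp only [hydef]; linarith
  have hy1 : y < 1 := by simp only [hydef]; linarith
  rw [S_eq k hρ.1, sum_mul]
  have hterm : ∀ j ∈ range (k+2), (coef (k+1) j + coef k j) * (1/y^(j+1)) * y^(k+2)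
      = (coef (k+1) j + coef k j) * y^(k+1-j) := by
    intro j hj
    simp only [mem_range] at hj
    have : y^(k+2) = y^(j+1) * y^(k+1-j) := by
      rw [← pow_add]; congr 1; omega
    rw [this]; field_simp
  rw [sum_congr rfl hterm, sum_range_succ, sum_range_succ]
  rw [coef_eq_zero k (k+1) (by omega), coef_diag (k+1), coef_sub k, coef_diag k]
  have e1 : k+1-(k+1) = 0 := by omega
  have e2 : k+1-k = 1 := by omega
  rw [e1, e2, pow_zero, pow_one]
  have hbound : |∑ j ∈ range k, (coef (k+1) j + coef k j) * y^(k+1-j)|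
      ≤ (∑ j ∈ range k, |coef (k+1) j + coef k j|) * y^2 := by
    calc |∑ j ∈ range k, (coef (k+1) j + coef k j) * y^(k+1-j)|
        ≤ ∑ j ∈ range k, |(coef (k+1) j + coef k j) * y^(k+1-j)| := abs_sum_le_sum_abs _ _
      _ ≤ ∑ j ∈ range k, |coef (k+1) j + coef k j| * y^2 := by
          refine sum_le_sum fun j hj => ?_
          simp only [mem_range] at hj
          rw [abs_mul, abs_of_pos (pow_pos hy0 _)]
          exact mul_le_mul_of_nonneg_left
            (pow_le_pow_of_le_one hy0.le hy1.le (by omega)) (abs_nonneg _)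
      _ = _ := by rw [← sum_mul]
  have key : ∑ j ∈ range k, (coef (k+1) j + coef k j) * y^(k+1-j)
      + (-((k+2).factorial : ℝ)/2 + (k.factorial : ℝ)) * y + (((k+1).factorial : ℝ) + 0) * 1
      - ((((k+1).factorial : ℝ)) + (((k.factorial : ℝ)) - ((k+2).factorial : ℝ)/2) * y)
      = ∑ j ∈ range k, (coef (k+1) j + coef k j) * y^(k+1-j) := by ring
  rw [key]
  calc |∑ j ∈ range k, (coef (k+1) j + coef k j) * y^(k+1-j)|
      ≤ (∑ j ∈ range k, |coef (k+1) j + coef k j|) * y^2 := hbound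
    _ ≤ ((∑ j ∈ range k, |coef (k+1) j + coef k j|) + 1) * y^2 := by nlinarith

lemma yHhat_bound (a b c d e f : ℝ) (hA : a + 4*c = 0) (hB : 2*b - 8*c + 8*d + 4*e = 0) :
    ∃ C : ℝ, 0 < C ∧ ∀ ρ : ℝ, ρ ∈ Set.Ioo (0:ℝ) (1/2) →
      |a*ρ^2 + b*ρ^2*(1 - Real.exp (-2*ρ)) + c*(1 - Real.exp (-2*ρ))^2
        + d*(1 - Real.exp (-2*ρ))^3 + e*ρ*(1 - Real.exp (-2*ρ))^2
        + f*ρ*(1 - Real.exp (-2*ρ))^3| ≤ C * ρ^4 := by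
  set M1 : ℝ := 4*|b| + 17*|c| + 144*|d| + 24*|e| + 152*|f| + 1 with hM1
  set M2 : ℝ := |b| + (|c|+|e|)*2 + (|d|+|f|)*3 + 1 with hM2
  refine ⟨M1 + M2, by positivity, ?_⟩
  intro ρ hρ
  obtain ⟨hρ0, hρh⟩ := hρ
  set y : ℝ := 1 - Real.exp (-2*ρ) with hydef
  set P : ℝ := 2*ρ - 2*ρ^2 + (4/3)*ρ^3 with hPdef
  -- Taylor bound for exp
  have hexp : |Real.exp (-2*ρ) - ∑ i ∈ range 4, (-2*ρ)^i / i.factorial|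
      ≤ |(-2*ρ)|^4 * ((4:ℕ).succ / ((4:ℕ).factorial * 4)) := by
    apply Real.exp_bound (by rw [abs_of_nonpos (by linarith)]; linarith) (by norm_num)
  have hsum : ∑ i ∈ range 4, (-2*ρ)^i / (i.factorial : ℝ)
      = 1 - 2*ρ + 2*ρ^2 - (4/3)*ρ^3 := by
    rw [Finset.sum_range_succ, Finset.sum_range_succ, Finset.sum_range_succ,
      Finset.sum_range_one]
    norm_num [Nat.factorial]
    ring
  have habs : |(-2*ρ)|^4 = 16*ρ^4 := by
    rw [abs_of_nonpos (by linarith)]; ring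
  have hE : |P - y| ≤ ρ^4 := by
    have : P - y = Real.exp (-2*ρ) - (1 - 2*ρ + 2*ρ^2 - (4/3)*ρ^3) := by
      rw [hydef, hPdef]; ring
    rw [this, ← hsum]
    refine le_trans hexp ?_
    rw [habs]
    norm_num [Nat.factorial]
    nlinarith [pow_pos hρ0 4]
  -- bounds on y and P
  have hx1 : Real.exp (-2*ρ) < 1 := Real.exp_lt_one_iff.mpr (by linarith)
  have hx0 : 0 < Real.exp (-2*ρ) := Real.exp_pos _
  have hy0 : 0 ≤ y := by rw [hydef]; linarith
  have hy1 : y ≤ 1 := by rw [hydef]; linarith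
  have hP0 : 0 ≤ P := by rw [hPdef]; nlinarith
  have hP1 : P ≤ 1 := by rw [hPdef]; nlinarith
  -- main decomposition
  have hid : a*ρ^2 + b*ρ^2*y + c*y^2 + d*y^3 + e*ρ*y^2 + f*ρ*y^3
      = (a*ρ^2 + b*ρ^2*P + c*P^2 + d*P^3 + e*ρ*P^2 + f*ρ*P^3)
        + (y - P) * (b*ρ^2 + (c + e*ρ)*(y+P) + (d + f*ρ)*(y^2 + y*P + P^2)) := by
    ring
  -- polynomial part
  have hpoly : a*ρ^2 + b*ρ^2*P + c*P^2 + d*P^3 + e*ρ*P^2 + f*ρ*P^3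
      = (a + 4*c)*ρ^2 + (2*b - 8*c + 8*d + 4*e)*ρ^3
        + ρ^4 * (b*(-2 + (4/3)*ρ)
          + c*(28/3 - (16/3)*ρ + (16/9)*ρ^2)
          + d*(-24 + 40*ρ - 40*ρ^2 + (80/3)*ρ^3 - (32/3)*ρ^4 + (64/27)*ρ^5)
          + e*(-8 + (28/3)*ρ - (16/3)*ρ^2 + (16/9)*ρ^3)
          + f*(8 - 24*ρ + 40*ρ^2 - 40*ρ^3 + (80/3)*ρ^4 - (32/3)*ρ^5 + (64/27)*ρ^6)) := by
    rw [hPdef]; ring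
  rw [hid, hpoly, hA, hB]
  have hρ1 : ρ ≤ 1 := by linarith
  have pl : ∀ k : ℕ, 0 ≤ ρ^k ∧ ρ^k ≤ 1 :=
    fun k => ⟨pow_nonneg hρ0.le k, pow_le_one₀ hρ0.le hρ1⟩
  have hRb : |(-2 + (4/3)*ρ : ℝ)| ≤ 4 := by
    rw [abs_le]; constructor <;> linarith [(pl 1).1, (pl 1).2]
  have hRc : |(28/3 - (16/3)*ρ + (16/9)*ρ^2 : ℝ)| ≤ 17 := by
    rw [abs_le]; constructor <;>
      linarith [(pl 1).1, (pl 1).2, (pl 2).1, (pl 2).2]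
  have hRd : |(-24 + 40*ρ - 40*ρ^2 + (80/3)*ρ^3 - (32/3)*ρ^4 + (64/27)*ρ^5 : ℝ)| ≤ 144 := by
    rw [abs_le]; constructor <;>
      linarith [(pl 1).1, (pl 1).2, (pl 2).1, (pl 2).2, (pl 3).1, (pl 3).2,
        (pl 4).1, (pl 4).2, (pl 5).1, (pl 5).2]
  have hRe : |(-8 + (28/3)*ρ - (16/3)*ρ^2 + (16/9)*ρ^3 : ℝ)| ≤ 24 := by
    rw [abs_le]; constructor <;>
      linarith [(pl 1).1, (pl 1).2, (pl 2).1, (pl 2).2, (pl 3).1, (pl 3).2]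
  have hRf : |(8 - 24*ρ + 40*ρ^2 - 40*ρ^3 + (80/3)*ρ^4 - (32/3)*ρ^5 + (64/27)*ρ^6 : ℝ)| ≤ 152 := by
    rw [abs_le]; constructor <;>
      linarith [(pl 1).1, (pl 1).2, (pl 2).1, (pl 2).2, (pl 3).1, (pl 3).2,
        (pl 4).1, (pl 4).2, (pl 5).1, (pl 5).2, (pl 6).1, (pl 6).2]
  have eb : |b*(-2 + (4/3)*ρ)| ≤ |b| * 4 := by
    rw [abs_mul]; exact mul_le_mul_of_nonneg_left hRb (abs_nonneg b)
  have ec : |c*(28/3 - (16/3)*ρ + (16/9)*ρ^2)| ≤ |c| * 17 := by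
    rw [abs_mul]; exact mul_le_mul_of_nonneg_left hRc (abs_nonneg c)
  have ed : |d*(-24 + 40*ρ - 40*ρ^2 + (80/3)*ρ^3 - (32/3)*ρ^4 + (64/27)*ρ^5)| ≤ |d| * 144 := by
    rw [abs_mul]; exact mul_le_mul_of_nonneg_left hRd (abs_nonneg d)
  have ee' : |e*(-8 + (28/3)*ρ - (16/3)*ρ^2 + (16/9)*ρ^3)| ≤ |e| * 24 := by
    rw [abs_mul]; exact mul_le_mul_of_nonneg_left hRe (abs_nonneg e)
  have ef : |f*(8 - 24*ρ + 40*ρ^2 - 40*ρ^3 + (80/3)*ρ^4 - (32/3)*ρ^5 + (64/27)*ρ^6)| ≤ |f| * 152 := by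
    rw [abs_mul]; exact mul_le_mul_of_nonneg_left hRf (abs_nonneg f)
  have hR : |b*(-2 + (4/3)*ρ)
          + c*(28/3 - (16/3)*ρ + (16/9)*ρ^2)
          + d*(-24 + 40*ρ - 40*ρ^2 + (80/3)*ρ^3 - (32/3)*ρ^4 + (64/27)*ρ^5)
          + e*(-8 + (28/3)*ρ - (16/3)*ρ^2 + (16/9)*ρ^3)
          + f*(8 - 24*ρ + 40*ρ^2 - 40*ρ^3 + (80/3)*ρ^4 - (32/3)*ρ^5 + (64/27)*ρ^6)| ≤ M1 := by
    have h1 := abs_add_le (b*(-2 + (4/3)*ρ)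
          + c*(28/3 - (16/3)*ρ + (16/9)*ρ^2)
          + d*(-24 + 40*ρ - 40*ρ^2 + (80/3)*ρ^3 - (32/3)*ρ^4 + (64/27)*ρ^5)
          + e*(-8 + (28/3)*ρ - (16/3)*ρ^2 + (16/9)*ρ^3))
          (f*(8 - 24*ρ + 40*ρ^2 - 40*ρ^3 + (80/3)*ρ^4 - (32/3)*ρ^5 + (64/27)*ρ^6))
    have h2 := abs_add_le (b*(-2 + (4/3)*ρ)
          + c*(28/3 - (16/3)*ρ + (16/9)*ρ^2)
          + d*(-24 + 40*ρ - 40*ρ^2 + (80/3)*ρ^3 - (32/3)*ρ^4 + (64/27)*ρ^5))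
          (e*(-8 + (28/3)*ρ - (16/3)*ρ^2 + (16/9)*ρ^3))
    have h3 := abs_add_le (b*(-2 + (4/3)*ρ)
          + c*(28/3 - (16/3)*ρ + (16/9)*ρ^2))
          (d*(-24 + 40*ρ - 40*ρ^2 + (80/3)*ρ^3 - (32/3)*ρ^4 + (64/27)*ρ^5))
    have h4 := abs_add_le (b*(-2 + (4/3)*ρ)) (c*(28/3 - (16/3)*ρ + (16/9)*ρ^2))
    rw [hM1]
    linarith [eb, ec, ed, ee', ef]
  have hBr : |b*ρ^2 + (c + e*ρ)*(y+P) + (d + f*ρ)*(y^2 + y*P + P^2)| ≤ M2 := by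
    have hρa : |ρ| ≤ 1 := by rw [abs_of_pos hρ0]; linarith
    have t1 : |b*ρ^2| ≤ |b| := by
      rw [abs_mul]
      have h : |ρ^2| ≤ 1 := by rw [abs_of_nonneg (pl 2).1]; exact (pl 2).2
      calc |b| * |ρ^2| ≤ |b| * 1 := mul_le_mul_of_nonneg_left h (abs_nonneg b)
        _ = |b| := mul_one _
    have heρ : |e*ρ| ≤ |e| := by
      rw [abs_mul]
      calc |e| * |ρ| ≤ |e| * 1 := mul_le_mul_of_nonneg_left hρa (abs_nonneg e)
        _ = |e| := mul_one _
    have hfρ : |f*ρ| ≤ |f| := by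
      rw [abs_mul]
      calc |f| * |ρ| ≤ |f| * 1 := mul_le_mul_of_nonneg_left hρa (abs_nonneg f)
        _ = |f| := mul_one _
    have t2 : |(c + e*ρ)*(y+P)| ≤ (|c|+|e|)*2 := by
      rw [abs_mul]
      have h1 : |c + e*ρ| ≤ |c| + |e| := le_trans (abs_add_le _ _) (by linarith)
      have h2 : |y + P| ≤ 2 := by rw [abs_of_nonneg (by linarith)]; linarith
      exact mul_le_mul h1 h2 (abs_nonneg _) (by positivity)
    have t3 : |(d + f*ρ)*(y^2 + y*P + P^2)| ≤ (|d|+|f|)*3 := by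
      rw [abs_mul]
      have h1 : |d + f*ρ| ≤ |d| + |f| := le_trans (abs_add_le _ _) (by linarith)
      have hyy : y^2 ≤ 1 := pow_le_one₀ hy0 hy1
      have hPP : P^2 ≤ 1 := pow_le_one₀ hP0 hP1
      have hyP2 : y*P ≤ 1 := mul_le_one₀ hy1 hP0 hP1
      have h2 : |y^2 + y*P + P^2| ≤ 3 := by
        rw [abs_of_nonneg (by positivity)]; linarith
      exact mul_le_mul h1 h2 (abs_nonneg _) (by positivity)
    calc |b*ρ^2 + (c + e*ρ)*(y+P) + (d + f*ρ)*(y^2 + y*P + P^2)|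
        ≤ |b*ρ^2 + (c + e*ρ)*(y+P)| + |(d + f*ρ)*(y^2 + y*P + P^2)| := abs_add_le _ _
      _ ≤ (|b*ρ^2| + |(c + e*ρ)*(y+P)|) + |(d + f*ρ)*(y^2 + y*P + P^2)| := by
          have := abs_add_le (b*ρ^2) ((c + e*ρ)*(y+P)); linarith
      _ ≤ M2 := by rw [hM2]; linarith
  calc |0*ρ^2 + 0*ρ^3 + ρ^4 * (b*(-2 + (4/3)*ρ)
          + c*(28/3 - (16/3)*ρ + (16/9)*ρ^2)
          + d*(-24 + 40*ρ - 40*ρ^2 + (80/3)*ρ^3 - (32/3)*ρ^4 + (64/27)*ρ^5)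
          + e*(-8 + (28/3)*ρ - (16/3)*ρ^2 + (16/9)*ρ^3)
          + f*(8 - 24*ρ + 40*ρ^2 - 40*ρ^3 + (80/3)*ρ^4 - (32/3)*ρ^5 + (64/27)*ρ^6))
        + (y - P) * (b*ρ^2 + (c + e*ρ)*(y+P) + (d + f*ρ)*(y^2 + y*P + P^2))|
      ≤ |ρ^4 * (b*(-2 + (4/3)*ρ)
          + c*(28/3 - (16/3)*ρ + (16/9)*ρ^2)
          + d*(-24 + 40*ρ - 40*ρ^2 + (80/3)*ρ^3 - (32/3)*ρ^4 + (64/27)*ρ^5)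
          + e*(-8 + (28/3)*ρ - (16/3)*ρ^2 + (16/9)*ρ^3)
          + f*(8 - 24*ρ + 40*ρ^2 - 40*ρ^3 + (80/3)*ρ^4 - (32/3)*ρ^5 + (64/27)*ρ^6))|
        + |(y - P)| * |(b*ρ^2 + (c + e*ρ)*(y+P) + (d + f*ρ)*(y^2 + y*P + P^2))| := by
          rw [zero_mul, zero_mul, zero_add, zero_add, ← abs_mul]
          exact abs_add_le _ _
    _ ≤ ρ^4 * M1 + ρ^4 * M2 := by
        have e1 : |ρ^4| = ρ^4 := abs_of_pos (by positivity)
        rw [abs_mul, e1]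
        have hyP : |y - P| ≤ ρ^4 := by rw [abs_sub_comm]; exact hE
        have h5 := mul_le_mul hyP hBr (abs_nonneg _) (by positivity : (0:ℝ) ≤ ρ^4)
        have h6 := mul_le_mul_of_nonneg_left hR (by positivity : (0:ℝ) ≤ ρ^4)
        exact add_le_add h6 h5
    _ = (M1 + M2) * ρ^4 := by ring

lemma final_est (ρ y Y2 Y3 Y5 N3 N2 N1 N0 Qv F2 F4 s1 s2 s3 s4 F1 C1 C2 C3 C4 CH CQ F3 : ℝ)
    (hρ0 : 0 < ρ) (hy0 : 0 < y) (hy1 : y ≤ 1) (hyρ : y ≤ 2*ρ) (hρy : ρ ≤ y)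
    (hY32 : Y3 = Y2*y) (hY53 : Y5 = Y3*y^2) (hY3pos : 0 < Y3)
    (b1 : |N3*Y5 - (F4 + s1*y)| ≤ C1*y^2)
    (b2 : |N2*(Y3*y) - (F3 + s2*y)| ≤ C2*y^2)
    (b3 : |N1*Y3 - (F2 + s3*y)| ≤ C3*y^2)
    (b4 : |N0*Y2 - (F1 + s4*y)| ≤ C4*y^2)
    (hQabs : |Qv| * ρ^2 ≤ CQ)
    (hHb : |(F4 + (s1+3*F3)*y) - Qv*(F2*y^2 + (s3+F1)*y^3)| ≤ CH*ρ^2)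
    (hF2pos : 0 < F2)
    (hsmall : (|s3+F1| + (C3+C4+|s4|))*y ≤ F2/2)
    (hC1 : 0 ≤ C1) (hC2 : 0 ≤ C2) (hC3 : 0 ≤ C3) (hC4 : 0 ≤ C4) (hCH : 0 ≤ CH) :
    |(N3+3*N2+2*N1)/(N1+N0) - Qv|
      ≤ 2*((C1+3*C2+3*|s2|+2*(F2+|s3|+C3)) + 4*CQ*(C3+C4+|s4|) + CH)/F2 := by
  have hCQ : 0 ≤ CQ := le_trans (by positivity) hQabs
  have hy2 : (0:ℝ) < y^2 := by positivity
  -- |N1*Y3| bound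
  have hN1Y3 : |N1*Y3| ≤ F2 + |s3| + C3 := by
    have h1 : |N1*Y3| ≤ |N1*Y3 - (F2 + s3*y)| + |F2 + s3*y| := by
      calc |N1*Y3| = |(N1*Y3 - (F2 + s3*y)) + (F2 + s3*y)| := by ring_nf
        _ ≤ _ := abs_add_le _ _
    have hyabs : |y| ≤ 1 := by rw [abs_of_pos hy0]; exact hy1
    have h2 : |F2 + s3*y| ≤ F2 + |s3| := by
      calc |F2 + s3*y| ≤ |F2| + |s3*y| := abs_add_le _ _
        _ = F2 + |s3| * |y| := by rw [abs_of_pos hF2pos, abs_mul]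
        _ ≤ F2 + |s3| * 1 := by
            have := mul_le_mul_of_nonneg_left hyabs (abs_nonneg s3)
            linarith
        _ = F2 + |s3| := by ring
    have h4 : C3*y^2 ≤ C3 := by
      calc C3*y^2 ≤ C3*1 := mul_le_mul_of_nonneg_left (pow_le_one₀ hy0.le hy1) hC3
        _ = C3 := mul_one _
    linarith [b3]
  -- numerator bound
  have hbN : |(N3+3*N2+2*N1)*Y5 - (F4 + (s1+3*F3)*y)|
      ≤ (C1+3*C2+3*|s2|+2*(F2+|s3|+C3))*y^2 := by
    have hid : (N3+3*N2+2*N1)*Y5 - (F4 + (s1+3*F3)*y)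
        = (N3*Y5 - (F4 + s1*y)) + 3*y*(N2*(Y3*y) - (F3 + s2*y)) + 3*s2*y^2
          + 2*y^2*(N1*Y3) := by rw [hY53]; ring
    have t2 : |3*y*(N2*(Y3*y) - (F3 + s2*y))| ≤ 3*C2*y^2 := by
      rw [abs_mul, abs_of_nonneg (by linarith : (0:ℝ) ≤ 3*y)]
      calc 3*y*|N2*(Y3*y) - (F3 + s2*y)| ≤ 3*y*(C2*y^2) :=
            mul_le_mul_of_nonneg_left b2 (by linarith)
        _ = 3*C2*y^2*y := by ring
        _ ≤ 3*C2*y^2*1 := mul_le_mul_of_nonneg_left hy1 (by positivity)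
        _ = 3*C2*y^2 := by ring
    have t3 : |3*s2*y^2| = 3*|s2| *y^2 := by
      rw [abs_mul, abs_mul, abs_of_nonneg (by norm_num : (0:ℝ) ≤ (3:ℝ)), abs_of_nonneg hy2.le]
    have t4 : |2*y^2*(N1*Y3)| ≤ 2*(F2+|s3|+C3)*y^2 := by
      rw [abs_mul, abs_of_nonneg (by positivity : (0:ℝ) ≤ 2*y^2)]
      calc 2*y^2*|N1*Y3| ≤ 2*y^2*(F2+|s3|+C3) :=
            mul_le_mul_of_nonneg_left hN1Y3 (by positivity)
        _ = 2*(F2+|s3|+C3)*y^2 := by ring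
    rw [hid]
    calc |(N3*Y5 - (F4 + s1*y)) + 3*y*(N2*(Y3*y) - (F3 + s2*y)) + 3*s2*y^2 + 2*y^2*(N1*Y3)|
        ≤ |(N3*Y5 - (F4 + s1*y)) + 3*y*(N2*(Y3*y) - (F3 + s2*y)) + 3*s2*y^2| + |2*y^2*(N1*Y3)| :=
          abs_add_le _ _
      _ ≤ |(N3*Y5 - (F4 + s1*y)) + 3*y*(N2*(Y3*y) - (F3 + s2*y))| + |3*s2*y^2| + |2*y^2*(N1*Y3)| := by
          linarith [abs_add_le ((N3*Y5 - (F4 + s1*y)) + 3*y*(N2*(Y3*y) - (F3 + s2*y))) (3*s2*y^2)]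
      _ ≤ |N3*Y5 - (F4 + s1*y)| + |3*y*(N2*(Y3*y) - (F3 + s2*y))| + |3*s2*y^2| + |2*y^2*(N1*Y3)| := by
          linarith [abs_add_le (N3*Y5 - (F4 + s1*y)) (3*y*(N2*(Y3*y) - (F3 + s2*y)))]
      _ ≤ (C1+3*C2+3*|s2|+2*(F2+|s3|+C3))*y^2 := by rw [t3]; linarith [b1, t2, t4]
  -- denominator bound
  have hbD : |(N1+N0)*Y3 - (F2 + (s3+F1)*y)| ≤ (C3+C4+|s4|)*y^2 := by
    have hid : (N1+N0)*Y3 - (F2 + (s3+F1)*y)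
        = (N1*Y3 - (F2 + s3*y)) + y*(N0*Y2 - (F1 + s4*y)) + s4*y^2 := by rw [hY32]; ring
    have t2 : |y*(N0*Y2 - (F1 + s4*y))| ≤ C4*y^2 := by
      rw [abs_mul, abs_of_pos hy0]
      calc y*|N0*Y2 - (F1 + s4*y)| ≤ y*(C4*y^2) := mul_le_mul_of_nonneg_left b4 hy0.le
        _ = C4*y^2*y := by ring
        _ ≤ C4*y^2*1 := mul_le_mul_of_nonneg_left hy1 (by positivity)
        _ = C4*y^2 := by ring
    have t3 : |s4*y^2| = |s4| *y^2 := by rw [abs_mul, abs_of_nonneg hy2.le]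
    rw [hid]
    calc |(N1*Y3 - (F2 + s3*y)) + y*(N0*Y2 - (F1 + s4*y)) + s4*y^2|
        ≤ |(N1*Y3 - (F2 + s3*y)) + y*(N0*Y2 - (F1 + s4*y))| + |s4*y^2| := abs_add_le _ _
      _ ≤ |N1*Y3 - (F2 + s3*y)| + |y*(N0*Y2 - (F1 + s4*y))| + |s4*y^2| := by
          linarith [abs_add_le (N1*Y3 - (F2 + s3*y)) (y*(N0*Y2 - (F1 + s4*y)))]
      _ ≤ (C3+C4+|s4|)*y^2 := by rw [t3]; linarith [b3, t2]
  -- lower bound on denominator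
  have hDl : F2/2 ≤ (N1+N0)*Y3 := by
    have h1 : (N1+N0)*Y3 ≥ (F2 + (s3+F1)*y) - (C3+C4+|s4|)*y^2 := by
      have := abs_le.1 hbD
      linarith [this.1]
    have h2 : -(|s3+F1|) * y ≤ (s3+F1)*y :=
      mul_le_mul_of_nonneg_right (neg_abs_le (s3+F1)) hy0.le
    have h3 : (C3+C4+|s4|)*y^2 ≤ (C3+C4+|s4|)*y := by
      have hn : 0 ≤ C3+C4+|s4| := by positivity
      calc (C3+C4+|s4|)*y^2 = ((C3+C4+|s4|)*y)*y := by ring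
        _ ≤ ((C3+C4+|s4|)*y)*1 := mul_le_mul_of_nonneg_left hy1 (mul_nonneg hn hy0.le)
        _ = (C3+C4+|s4|)*y := mul_one _
    have hsmall' := hsmall
    rw [add_mul] at hsmall'
    linarith
  have hDpos : 0 < N1 + N0 := by
    by_contra h
    push_neg at h
    linarith [mul_nonpos_of_nonpos_of_nonneg h hY3pos.le]
  have hY5pos : 0 < Y5 := by rw [hY53]; positivity
  -- the W decomposition
  have hWi : ((N3+3*N2+2*N1) - Qv*(N1+N0))*Y5
      = ((N3+3*N2+2*N1)*Y5 - (F4 + (s1+3*F3)*y))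
        - Qv*y^2*((N1+N0)*Y3 - (F2 + (s3+F1)*y))
        + ((F4 + (s1+3*F3)*y) - Qv*(F2*y^2 + (s3+F1)*y^3)) := by
    rw [hY53]; ring
  have hy4 : y^2 ≤ 4*ρ^2 := by
    nlinarith [mul_le_mul hyρ hyρ hy0.le (by linarith : (0:ℝ) ≤ 2*ρ)]
  have hQy : |Qv| *y^2 ≤ 4*CQ := by
    calc |Qv| *y^2 ≤ |Qv| *(4*ρ^2) := mul_le_mul_of_nonneg_left hy4 (abs_nonneg Qv)
      _ = 4*(|Qv| *ρ^2) := by ring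
      _ ≤ 4*CQ := by linarith
  have hmid : |Qv*y^2*((N1+N0)*Y3 - (F2 + (s3+F1)*y))| ≤ 4*CQ*(C3+C4+|s4|)*y^2 := by
    rw [abs_mul, abs_mul, abs_of_nonneg hy2.le]
    calc |Qv| *y^2*|(N1+N0)*Y3 - (F2 + (s3+F1)*y)|
        ≤ (4*CQ)*((C3+C4+|s4|)*y^2) :=
          mul_le_mul hQy hbD (abs_nonneg _) (by linarith)
      _ = 4*CQ*(C3+C4+|s4|)*y^2 := by ring
  have hHb' : |(F4 + (s1+3*F3)*y) - Qv*(F2*y^2 + (s3+F1)*y^3)| ≤ CH*y^2 := by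
    refine le_trans hHb (mul_le_mul_of_nonneg_left ?_ hCH)
    calc ρ^2 = ρ*ρ := sq ρ
      _ ≤ y*y := mul_le_mul hρy hρy hρ0.le hy0.le
      _ = y^2 := (sq y).symm
  have hWb : |((N3+3*N2+2*N1) - Qv*(N1+N0))*Y5|
      ≤ ((C1+3*C2+3*|s2|+2*(F2+|s3|+C3)) + 4*CQ*(C3+C4+|s4|) + CH)*y^2 := by
    rw [hWi]
    calc |((N3+3*N2+2*N1)*Y5 - (F4 + (s1+3*F3)*y))
        - Qv*y^2*((N1+N0)*Y3 - (F2 + (s3+F1)*y))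
        + ((F4 + (s1+3*F3)*y) - Qv*(F2*y^2 + (s3+F1)*y^3))|
        ≤ |((N3+3*N2+2*N1)*Y5 - (F4 + (s1+3*F3)*y))
            - Qv*y^2*((N1+N0)*Y3 - (F2 + (s3+F1)*y))|
          + |(F4 + (s1+3*F3)*y) - Qv*(F2*y^2 + (s3+F1)*y^3)| := abs_add_le _ _
      _ ≤ |(N3+3*N2+2*N1)*Y5 - (F4 + (s1+3*F3)*y)|
          + |Qv*y^2*((N1+N0)*Y3 - (F2 + (s3+F1)*y))|
          + |(F4 + (s1+3*F3)*y) - Qv*(F2*y^2 + (s3+F1)*y^3)| := by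
          linarith [abs_sub ((N3+3*N2+2*N1)*Y5 - (F4 + (s1+3*F3)*y))
            (Qv*y^2*((N1+N0)*Y3 - (F2 + (s3+F1)*y)))]
      _ ≤ _ := by linarith [hbN, hmid, hHb']
  -- final division
  have hΔ : (N3+3*N2+2*N1)/(N1+N0) - Qv
      = (((N3+3*N2+2*N1) - Qv*(N1+N0))*Y5) / ((N1+N0)*Y5) := by
    rw [mul_div_mul_right _ _ (ne_of_gt hY5pos)]
    field_simp
  rw [hΔ, abs_div, abs_of_pos (mul_pos hDpos hY5pos)]
  rw [div_le_iff₀ (mul_pos hDpos hY5pos)]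
  have hDY : (N1+N0)*Y5 = ((N1+N0)*Y3)*y^2 := by rw [hY53]; ring
  have hCN' : 0 ≤ (C1+3*C2+3*|s2|+2*(F2+|s3|+C3)) + 4*CQ*(C3+C4+|s4|) + CH := by positivity
  calc |((N3+3*N2+2*N1) - Qv*(N1+N0))*Y5|
      ≤ ((C1+3*C2+3*|s2|+2*(F2+|s3|+C3)) + 4*CQ*(C3+C4+|s4|) + CH)*y^2 := hWb
    _ ≤ 2*((C1+3*C2+3*|s2|+2*(F2+|s3|+C3)) + 4*CQ*(C3+C4+|s4|) + CH)/F2 * ((N1+N0)*Y5) := by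
        rw [hDY]
        rw [div_mul_eq_mul_div, le_div_iff₀ hF2pos]
        have hkey := mul_le_mul_of_nonneg_left hDl (mul_nonneg hCN' hy2.le)
        linarith [hkey]


lemma habs_div (X R CH ρ μ : ℝ) (h0 : 0 ≤ X) (hμ : 1 ≤ μ) (hρ : 0 < ρ)
    (heq : X * (4*(2*μ+2)*ρ^2) = R) (hle : R ≤ CH*ρ^4) : X ≤ CH*ρ^2 := by
  have hprod : 0 ≤ (μ - 1) * (X * ρ^2) :=
    mul_nonneg (by linarith) (mul_nonneg h0 (sq_nonneg ρ))
  have h1 : X * ρ^2 ≤ (CH*ρ^2) * ρ^2 := by nlinarith [mul_nonneg h0 (sq_nonneg ρ)]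
  exact le_of_mul_le_mul_right h1 (by positivity)

open Asymptotics in
theorem stmt_19 (m : ℕ) (hm : 1 ≤ m) (S : ℕ → ℝ → ℝ)
    (hS : ∀ k : ℕ, ∀ ρ : ℝ, S k ρ = ∑' l : ℕ, ((l : ℝ) + 1) * (l : ℝ) ^ k * Real.exp (-2 * ρ * l)) :
    (fun ρ : ℝ =>
        (S (2 * m + 3) ρ + 3 * S (2 * m + 2) ρ + 2 * S (2 * m + 1) ρ) /
            (S (2 * m + 1) ρ + S (2 * m) ρ) -
          ((2 * (m : ℝ) + 3) * (2 * (m : ℝ) + 4) / (4 * ρ ^ 2) +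
            2 * (m : ℝ) * (2 * (m : ℝ) + 3) / ((2 * (m : ℝ) + 2) * ρ)))
      =O[nhdsWithin 0 (Set.Ioi 0)] (fun _ : ℝ => (1 : ℝ)) := by
  have hμ : (1:ℝ) ≤ (m:ℝ) := by exact_mod_cast hm
  have hF1 : ((2*m+1).factorial:ℝ) = (2*(m:ℝ)+1)*((2*m).factorial:ℝ) := by
    rw [show (2*m+1) = (2*m)+1 from rfl, Nat.factorial_succ]; push_cast; ring
  have hF2 : ((2*m+2).factorial:ℝ) = (2*(m:ℝ)+2)*((2*m+1).factorial:ℝ) := by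
    rw [show (2*m+2) = (2*m+1)+1 from rfl, Nat.factorial_succ]; push_cast; ring
  have hF3 : ((2*m+3).factorial:ℝ) = (2*(m:ℝ)+3)*((2*m+2).factorial:ℝ) := by
    rw [show (2*m+3) = (2*m+2)+1 from rfl, Nat.factorial_succ]; push_cast; ring
  have hF4 : ((2*m+4).factorial:ℝ) = (2*(m:ℝ)+4)*((2*m+3).factorial:ℝ) := by
    rw [show (2*m+4) = (2*m+3)+1 from rfl, Nat.factorial_succ]; push_cast; ring
  have hF5 : ((2*m+5).factorial:ℝ) = (2*(m:ℝ)+5)*((2*m+4).factorial:ℝ) := by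
    rw [show (2*m+5) = (2*m+4)+1 from rfl, Nat.factorial_succ]; push_cast; ring
  have hA : (4*(2*(m:ℝ)+2)*((2*m+4).factorial:ℝ)) + 4*(-((2*(m:ℝ)+2)*((2*(m:ℝ)+3)*(2*(m:ℝ)+4))*((2*m+2).factorial:ℝ))) = 0 := by rw [hF4, hF3]; ring
  have hB : 2*(4*(2*(m:ℝ)+2)*((((2*m+3).factorial:ℝ) - ((2*m+5).factorial:ℝ)/2)+3*((2*m+3).factorial:ℝ))) - 8*(-((2*(m:ℝ)+2)*((2*(m:ℝ)+3)*(2*(m:ℝ)+4))*((2*m+2).factorial:ℝ))) + 8*(-((2*(m:ℝ)+2)*((2*(m:ℝ)+3)*(2*(m:ℝ)+4))*((((2*m+1).factorial:ℝ) - ((2*m+3).factorial:ℝ)/2)+((2*m+1).factorial:ℝ)))) + 4*(-(8*(m:ℝ)*(2*(m:ℝ)+3)*((2*m+2).factorial:ℝ))) = 0 := by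
    rw [hF5, hF4, hF3, hF2]; ring
  obtain ⟨CH, hCHpos, hCH⟩ := yHhat_bound (4*(2*(m:ℝ)+2)*((2*m+4).factorial:ℝ)) (4*(2*(m:ℝ)+2)*((((2*m+3).factorial:ℝ) - ((2*m+5).factorial:ℝ)/2)+3*((2*m+3).factorial:ℝ))) (-((2*(m:ℝ)+2)*((2*(m:ℝ)+3)*(2*(m:ℝ)+4))*((2*m+2).factorial:ℝ))) (-((2*(m:ℝ)+2)*((2*(m:ℝ)+3)*(2*(m:ℝ)+4))*((((2*m+1).factorial:ℝ) - ((2*m+3).factorial:ℝ)/2)+((2*m+1).factorial:ℝ)))) (-(8*(m:ℝ)*(2*(m:ℝ)+3)*((2*m+2).factorial:ℝ))) (-(8*(m:ℝ)*(2*(m:ℝ)+3)*((((2*m+1).factorial:ℝ) - ((2*m+3).factorial:ℝ)/2)+((2*m+1).factorial:ℝ)))) hA hB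
  obtain ⟨C1, hC1pos, hb1⟩ := S_approx (2*m+3)
  obtain ⟨C2, hC2pos, hb2⟩ := S_approx (2*m+2)
  obtain ⟨C3, hC3pos, hb3⟩ := S_approx (2*m+1)
  obtain ⟨C4, hC4pos, hb4⟩ := S_approx (2*m)
  have hF2pos : (0:ℝ) < ((2*m+2).factorial:ℝ) := by exact_mod_cast Nat.factorial_pos (2*m+2)
  obtain ⟨av, hav⟩ : ∃ t:ℝ, t = |(((2*m+1).factorial:ℝ) - ((2*m+3).factorial:ℝ)/2)+((2*m+1).factorial:ℝ)| + (C3+C4+|(((2*m).factorial:ℝ) - ((2*m+2).factorial:ℝ)/2)|) := ⟨_, rfl⟩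
  have havnn : (0:ℝ) ≤ av := by rw [hav]; positivity
  obtain ⟨δv, hδv⟩ : ∃ t:ℝ, t = ((2*m+2).factorial:ℝ)/(2*(av+1)) := ⟨_, rfl⟩
  have hδpos : (0:ℝ) < δv := by
    rw [hδv]; exact div_pos hF2pos (by linarith)
  rw [Asymptotics.isBigO_iff]
  refine ⟨2*((C1+3*C2+3*|(((2*m+2).factorial:ℝ) - ((2*m+4).factorial:ℝ)/2)|+2*(((2*m+2).factorial:ℝ)+|(((2*m+1).factorial:ℝ) - ((2*m+3).factorial:ℝ)/2)|+C3)) + 4*((2*(m:ℝ)+3)*(2*(m:ℝ)+4)/4 + 2*(m:ℝ)*(2*(m:ℝ)+3)/(2*(m:ℝ)+2))*(C3+C4+|(((2*m).factorial:ℝ) - ((2*m+2).factorial:ℝ)/2)|) + CH)/((2*m+2).factorial:ℝ), ?_⟩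
  have hr0 : (0:ℝ) < min (1/2) (δv/2) := by
    apply lt_min (by norm_num) (by linarith)
  filter_upwards [Ioo_mem_nhdsGT_of_mem (Set.left_mem_Ico.2 hr0)] with ρ hρmem
  obtain ⟨hρ0, hρr⟩ := hρmem
  have hρh : ρ < 1/2 := lt_of_lt_of_le hρr (min_le_left _ _)
  have hρδ : ρ < δv/2 :=
    lt_of_lt_of_le hρr (min_le_right _ _)
  simp only [Real.norm_eq_abs, norm_one, mul_one]
  rw [hS (2*m+3) ρ, hS (2*m+2) ρ, hS (2*m+1) ρ, hS (2*m) ρ]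
  have hρ1 : ρ < 1 := by linarith
  have hx0 : 0 < Real.exp (-2*ρ) := Real.exp_pos _
  have hx1 : Real.exp (-2*ρ) < 1 := Real.exp_lt_one_iff.mpr (by linarith)
  set y : ℝ := 1 - Real.exp (-2*ρ) with hydef
  have hy0 : 0 < y := by rw [hydef]; linarith
  have hy1 : y ≤ 1 := by rw [hydef]; linarith
  have hyρ : y ≤ 2*ρ := by
    have h := Real.add_one_le_exp (-2*ρ)
    rw [hydef]; linarith
  have hρy : ρ ≤ y := by
    have hmul : Real.exp (-2*ρ) * Real.exp (2*ρ) = 1 := by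
      rw [← Real.exp_add]; norm_num
    have h1 := Real.add_one_le_exp (2*ρ)
    have h2 : 0 ≤ Real.exp (-2*ρ) * (Real.exp (2*ρ) - (1+2*ρ)) :=
      mul_nonneg hx0.le (by linarith)
    have h3 : Real.exp (-2*ρ) * (1+2*ρ) ≤ 1 := by nlinarith [h2, hmul]
    have h4 : 0 ≤ ρ*(1-2*ρ) := mul_nonneg hρ0.le (by linarith)
    rw [hydef]
    nlinarith [h3, h4, hρ0]
  have hQnn : 0 ≤ (2*(m:ℝ)+3)*(2*(m:ℝ)+4)/(4*ρ^2) + 2*(m:ℝ)*(2*(m:ℝ)+3)/((2*(m:ℝ)+2)*ρ) := by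
    have h1 : 0 ≤ (2*(m:ℝ)+3)*(2*(m:ℝ)+4)/(4*ρ^2) := by positivity
    have h2 : 0 ≤ 2*(m:ℝ)*(2*(m:ℝ)+3)/((2*(m:ℝ)+2)*ρ) := by positivity
    linarith
  have hQabs : |(2*(m:ℝ)+3)*(2*(m:ℝ)+4)/(4*ρ^2) + 2*(m:ℝ)*(2*(m:ℝ)+3)/((2*(m:ℝ)+2)*ρ)| * ρ^2
      ≤ ((2*(m:ℝ)+3)*(2*(m:ℝ)+4)/4 + 2*(m:ℝ)*(2*(m:ℝ)+3)/(2*(m:ℝ)+2)) := by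
    rw [abs_of_nonneg hQnn]
    have heq : ((2*(m:ℝ)+3)*(2*(m:ℝ)+4)/(4*ρ^2) + 2*(m:ℝ)*(2*(m:ℝ)+3)/((2*(m:ℝ)+2)*ρ)) * ρ^2
        = (2*(m:ℝ)+3)*(2*(m:ℝ)+4)/4 + (2*(m:ℝ)*(2*(m:ℝ)+3)/(2*(m:ℝ)+2))*ρ := by
      field_simp
    rw [heq]
    have h2 : (2*(m:ℝ)*(2*(m:ℝ)+3)/(2*(m:ℝ)+2))*ρ ≤ 2*(m:ℝ)*(2*(m:ℝ)+3)/(2*(m:ℝ)+2) := by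
      have hpos : 0 ≤ 2*(m:ℝ)*(2*(m:ℝ)+3)/(2*(m:ℝ)+2) := by positivity
      calc (2*(m:ℝ)*(2*(m:ℝ)+3)/(2*(m:ℝ)+2))*ρ ≤ (2*(m:ℝ)*(2*(m:ℝ)+3)/(2*(m:ℝ)+2))*1 :=
            mul_le_mul_of_nonneg_left (by linarith) hpos
        _ = 2*(m:ℝ)*(2*(m:ℝ)+3)/(2*(m:ℝ)+2) := mul_one _
    linarith
  have hCHρ := hCH ρ ⟨hρ0, hρh⟩
  rw [← hydef] at hCHρ
  have hmulpos : (0:ℝ) < 4*(2*(m:ℝ)+2)*ρ^2 := by positivity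
  have hHeq : ((((2*m+4).factorial:ℝ) + ((((2*m+3).factorial:ℝ) - ((2*m+5).factorial:ℝ)/2)+3*((2*m+3).factorial:ℝ))*y) - ((2*(m:ℝ)+3)*(2*(m:ℝ)+4)/(4*ρ^2) + 2*(m:ℝ)*(2*(m:ℝ)+3)/((2*(m:ℝ)+2)*ρ))*(((2*m+2).factorial:ℝ)*y^2 + ((((2*m+1).factorial:ℝ) - ((2*m+3).factorial:ℝ)/2)+((2*m+1).factorial:ℝ))*y^3)) * (4*(2*(m:ℝ)+2)*ρ^2)
      = (4*(2*(m:ℝ)+2)*((2*m+4).factorial:ℝ))*ρ^2 + (4*(2*(m:ℝ)+2)*((((2*m+3).factorial:ℝ) - ((2*m+5).factorial:ℝ)/2)+3*((2*m+3).factorial:ℝ)))*ρ^2*y + (-((2*(m:ℝ)+2)*((2*(m:ℝ)+3)*(2*(m:ℝ)+4))*((2*m+2).factorial:ℝ)))*y^2 + (-((2*(m:ℝ)+2)*((2*(m:ℝ)+3)*(2*(m:ℝ)+4))*((((2*m+1).factorial:ℝ) - ((2*m+3).factorial:ℝ)/2)+((2*m+1).factorial:ℝ))))*y^3 + (-(8*(m:ℝ)*(2*(m:ℝ)+3)*((2*m+2).factorial:ℝ)))*ρ*y^2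 + (-(8*(m:ℝ)*(2*(m:ℝ)+3)*((((2*m+1).factorial:ℝ) - ((2*m+3).factorial:ℝ)/2)+((2*m+1).factorial:ℝ))))*ρ*y^3 := by
    field_simp
    ring
  have hHabs : |(((2*m+4).factorial:ℝ) + ((((2*m+3).factorial:ℝ) - ((2*m+5).factorial:ℝ)/2)+3*((2*m+3).factorial:ℝ))*y) - ((2*(m:ℝ)+3)*(2*(m:ℝ)+4)/(4*ρ^2) + 2*(m:ℝ)*(2*(m:ℝ)+3)/((2*(m:ℝ)+2)*ρ))*(((2*m+2).factorial:ℝ)*y^2 + ((((2*m+1).factorial:ℝ) - ((2*m+3).factorial:ℝ)/2)+((2*m+1).factorial:ℝ))*y^3)| * (4*(2*(m:ℝ)+2)*ρ^2)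
      = |(4*(2*(m:ℝ)+2)*((2*m+4).factorial:ℝ))*ρ^2 + (4*(2*(m:ℝ)+2)*((((2*m+3).factorial:ℝ) - ((2*m+5).factorial:ℝ)/2)+3*((2*m+3).factorial:ℝ)))*ρ^2*y + (-((2*(m:ℝ)+2)*((2*(m:ℝ)+3)*(2*(m:ℝ)+4))*((2*m+2).factorial:ℝ)))*y^2 + (-((2*(m:ℝ)+2)*((2*(m:ℝ)+3)*(2*(m:ℝ)+4))*((((2*m+1).factorial:ℝ) - ((2*m+3).factorial:ℝ)/2)+((2*m+1).factorial:ℝ))))*y^3 + (-(8*(m:ℝ)*(2*(m:ℝ)+3)*((2*m+2).factorial:ℝ)))*ρ*y^2 + (-(8*(m:ℝ)*(2*(m:ℝ)+3)*((((2*m+1).factorial:ℝ) - ((2*m+3).factorial:ℝ)/2)+((2*m+1).factorial:ℝ))))*ρ*y^3| := by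
    rw [← abs_of_pos hmulpos, ← abs_mul, hHeq]
  have hHb : |(((2*m+4).factorial:ℝ) + ((((2*m+3).factorial:ℝ) - ((2*m+5).factorial:ℝ)/2)+3*((2*m+3).factorial:ℝ))*y) - ((2*(m:ℝ)+3)*(2*(m:ℝ)+4)/(4*ρ^2) + 2*(m:ℝ)*(2*(m:ℝ)+3)/((2*(m:ℝ)+2)*ρ))*(((2*m+2).factorial:ℝ)*y^2 + ((((2*m+1).factorial:ℝ) - ((2*m+3).factorial:ℝ)/2)+((2*m+1).factorial:ℝ))*y^3)| ≤ CH*ρ^2 := by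
    exact habs_div _ _ _ _ _ (abs_nonneg _) hμ hρ0 hHabs hCHρ
  have hyδ : y ≤ δv := by linarith
  have hsmall0 : av*y ≤ ((2*m+2).factorial:ℝ)/2 := by
    have hne : av + 1 ≠ 0 := by linarith
    have hδeq : (av+1)*δv = ((2*m+2).factorial:ℝ)/2 := by
      rw [hδv]; field_simp
    calc av*y ≤ av*δv := mul_le_mul_of_nonneg_left hyδ havnn
      _ ≤ (av+1)*δv := mul_le_mul_of_nonneg_right (by linarith) hδpos.le
      _ = ((2*m+2).factorial:ℝ)/2 := hδeq
  rw [hav] at hsmall0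
  have b1 := hb1 ρ ⟨hρ0, hρ1⟩
  have b2 := hb2 ρ ⟨hρ0, hρ1⟩
  have b3 := hb3 ρ ⟨hρ0, hρ1⟩
  have b4 := hb4 ρ ⟨hρ0, hρ1⟩
  rw [← hydef] at b1 b2 b3 b4
  have b2' : |(∑' l:ℕ, ((l:ℝ)+1) * (l:ℝ)^(2*m+2) * Real.exp (-2*ρ*l))*(y^(2*m+3)*y) - (((2*m+3).factorial:ℝ) + (((2*m+2).factorial:ℝ) - ((2*m+4).factorial:ℝ)/2)*y)| ≤ C2*y^2 := by
    rw [← pow_succ]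
    exact b2
  exact final_est ρ y (y^(2*m+2)) (y^(2*m+3)) (y^(2*m+5))
    (∑' l:ℕ, ((l:ℝ)+1) * (l:ℝ)^(2*m+3) * Real.exp (-2*ρ*l))
    (∑' l:ℕ, ((l:ℝ)+1) * (l:ℝ)^(2*m+2) * Real.exp (-2*ρ*l))
    (∑' l:ℕ, ((l:ℝ)+1) * (l:ℝ)^(2*m+1) * Real.exp (-2*ρ*l))
    (∑' l:ℕ, ((l:ℝ)+1) * (l:ℝ)^(2*m) * Real.exp (-2*ρ*l))
    ((2*(m:ℝ)+3)*(2*(m:ℝ)+4)/(4*ρ^2) + 2*(m:ℝ)*(2*(m:ℝ)+3)/((2*(m:ℝ)+2)*ρ))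
    ((2*m+2).factorial:ℝ) ((2*m+4).factorial:ℝ) (((2*m+3).factorial:ℝ) - ((2*m+5).factorial:ℝ)/2) (((2*m+2).factorial:ℝ) - ((2*m+4).factorial:ℝ)/2) (((2*m+1).factorial:ℝ) - ((2*m+3).factorial:ℝ)/2) (((2*m).factorial:ℝ) - ((2*m+2).factorial:ℝ)/2) ((2*m+1).factorial:ℝ) C1 C2 C3 C4 CH ((2*(m:ℝ)+3)*(2*(m:ℝ)+4)/4 + 2*(m:ℝ)*(2*(m:ℝ)+3)/(2*(m:ℝ)+2)) ((2*m+3).factorial:ℝ)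
    hρ0 hy0 hy1 hyρ hρy (pow_succ y (2*m+2)) (pow_add y (2*m+3) 2) (pow_pos hy0 (2*m+3))
    b1 b2' b3 b4 hQabs hHb hF2pos hsmall0 hC1pos.le hC2pos.le hC3pos.le hC4pos.le hCHpos.le
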